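/- arXiv:1702.01845 — 4 statements merged into one kernel-verified Lean document; each statement's English description precedes it below -/
import Mathlib

section
/- Let f be a frame function on quantum effects (values in [0,1], summing to 1 over every POVM). Then f is homogeneous over nonnegative rationals: for any effect E and nonnegative rational q such that qE is an effect, f(qE) = q f(E). -/
open Matrix
open scoped ComplexOrder

/-- An effect on a finite-dimensional Hilbert space: `0 ≤ E ≤ 1`. -/
def IsEffect {d : ℕ} (E : Matrix (Fin d) (Fin d) ℂ) : Prop :=
  E.PosSemidef ∧ (1 - E).PosSemidef

/-- A frame function on quantum effects: takes values in `[0,1]` on effects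
and sums to `1` over every POVM (finite family of effects summing to the identity). -/
def IsFrameFunction {d : ℕ} (f : Matrix (Fin d) (Fin d) ℂ → ℝ) : Prop :=
  (∀ E, IsEffect E → f E ∈ Set.Icc (0 : ℝ) 1) ∧
  ∀ (n : ℕ) (X : Fin n → Matrix (Fin d) (Fin d) ℂ),
    (∀ i, IsEffect (X i)) → (∑ i, X i = 1) → ∑ i, f (X i) = 1

lemma psd_smul_real {d : ℕ} {M : Matrix (Fin d) (Fin d) ℂ} (hM : M.PosSemidef)
    {c : ℝ} (hc : 0 ≤ c) : ((c : ℂ) • M).PosSemidef := by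
  refine ⟨?_, ?_⟩
  · unfold Matrix.IsHermitian
    rw [conjTranspose_smul, hM.1]
    norm_num
  · intro x
    exact (hM.smul (Complex.zero_le_real.mpr hc)).2 x

lemma frame_zero {d : ℕ} {f : Matrix (Fin d) (Fin d) ℂ → ℝ} (hf : IsFrameFunction f) :
    f 0 = 0 := by
  have h1 : f 1 = 1 := by
    have := hf.2 1 (fun _ => 1)
      (fun _ => ⟨Matrix.PosSemidef.one, by simpa using Matrix.PosSemidef.zero⟩) (by simp)
    simpa using this
  have h2 := hf.2 2 ![1, 0] (by
      intro i
      fin_cases i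
      · exact ⟨Matrix.PosSemidef.one, by simpa using Matrix.PosSemidef.zero⟩
      · exact ⟨Matrix.PosSemidef.zero, by simpa using Matrix.PosSemidef.one⟩)
    (by simp [Fin.sum_univ_two])
  rw [Fin.sum_univ_two] at h2
  simp only [Matrix.cons_val_zero, Matrix.cons_val_one, Matrix.head_cons] at h2
  linarith

lemma frame_add {d : ℕ} {f : Matrix (Fin d) (Fin d) ℂ → ℝ} (hf : IsFrameFunction f)
    {A B : Matrix (Fin d) (Fin d) ℂ} (hA : IsEffect A) (hB : IsEffect B)
    (hAB : IsEffect (A + B)) : f (A + B) = f A + f B := by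
  set C := 1 - (A + B) with hC
  have hCeff : IsEffect C := ⟨hAB.2, by simpa [hC] using hAB.1⟩
  have h3 := hf.2 3 ![A, B, C] (by
      intro i
      fin_cases i
      · exact hA
      · exact hB
      · exact hCeff)
    (by
      rw [Fin.sum_univ_three]
      show A + B + (1 - (A + B)) = 1
      abel)
  have h2 := hf.2 2 ![A + B, C] (by
      intro i
      fin_cases i
      · exact hAB
      · exact hCeff)
    (by
      rw [Fin.sum_univ_two]
      show A + B + (1 - (A + B)) = 1
      abel)
  rw [Fin.sum_univ_three] at h3
  rw [Fin.sum_univ_two] at h2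
  simp only [Matrix.cons_val_zero, Matrix.cons_val_one, Matrix.head_cons,
    Matrix.cons_val_two, Matrix.tail_cons] at h2 h3
  linarith

lemma frame_nsmul {d : ℕ} {f : Matrix (Fin d) (Fin d) ℂ → ℝ} (hf : IsFrameFunction f)
    {G : Matrix (Fin d) (Fin d) ℂ} (hG : IsEffect G) :
    ∀ n : ℕ, IsEffect ((n : ℂ) • G) → f ((n : ℂ) • G) = n * f G := by
  intro n
  induction n with
  | zero => intro _; simp [frame_zero hf]
  | succ n ih =>
    intro hn
    have hcast : ((n : ℂ)) = (((n : ℝ) : ℝ) : ℂ) := by push_cast; rfl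
    have hnG : IsEffect ((n : ℂ) • G) := by
      constructor
      · rw [hcast]; exact psd_smul_real hG.1 (Nat.cast_nonneg n)
      · have h : 1 - (n : ℂ) • G = (1 - ((n + 1 : ℕ) : ℂ) • G) + G := by
          push_cast; module
        rw [h]
        exact hn.2.add hG.1
    have hsum : ((n + 1 : ℕ) : ℂ) • G = (n : ℂ) • G + G := by
      push_cast; module
    rw [hsum] at hn ⊢
    rw [frame_add hf hnG hG hn, ih hnG]
    push_cast; ring

/-- A frame function is homogeneous over the nonnegative rationals. -/
theorem frame_function_rat_homogeneous (d : ℕ) (hd : 2 ≤ d)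
    (f : Matrix (Fin d) (Fin d) ℂ → ℝ) (hf : IsFrameFunction f)
    (E : Matrix (Fin d) (Fin d) ℂ) (hE : IsEffect E)
    (q : ℚ) (hq : 0 ≤ q) (hqE : IsEffect ((q : ℂ) • E)) :
    f ((q : ℂ) • E) = q * f E := by
  set a : ℕ := q.num.toNat with ha
  set b : ℕ := q.den with hb
  have hnum : ((a : ℤ)) = q.num := Int.toNat_of_nonneg (Rat.num_nonneg.mpr hq)
  have hb0 : (0:ℝ) < b := by positivity
  have hbC : (b : ℂ) ≠ 0 := Nat.cast_ne_zero.mpr q.den_nz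
  have hqab : (q : ℂ) = (a : ℂ) / (b : ℂ) := by
    rw [Rat.cast_def]
    congr 1
    exact_mod_cast congrArg (Int.cast : ℤ → ℂ) hnum.symm
  have hqr : (q : ℝ) = (a : ℝ) / (b : ℝ) := by
    rw [Rat.cast_def]
    congr 1
    exact_mod_cast congrArg (Int.cast : ℤ → ℝ) hnum.symm
  set G : Matrix (Fin d) (Fin d) ℂ := ((b : ℂ)⁻¹) • E with hGdef
  have hG : IsEffect G := by
    constructor
    · have : ((b : ℂ)⁻¹) = (((b:ℝ)⁻¹ : ℝ) : ℂ) := by push_cast; ring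
      rw [hGdef, this]
      exact psd_smul_real hE.1 (by positivity)
    · have hb1 : (1:ℝ) ≤ (b:ℝ) := by exact_mod_cast q.pos
      have key : 1 - G = (((b:ℝ)⁻¹ : ℝ) : ℂ) • (1 - E) + (((1 - (b:ℝ)⁻¹ : ℝ)) : ℂ) • 1 := by
        rw [hGdef]; push_cast [Complex.ofReal_inv]
        module
      rw [key]
      have hinvle : (b:ℝ)⁻¹ ≤ 1 := by
        rw [inv_le_one_iff₀]; right; exact hb1
      exact (psd_smul_real hE.2 (by positivity)).add
        (psd_smul_real Matrix.PosSemidef.one (by linarith))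
  have hEbG : ((b : ℂ)) • G = E := by
    rw [hGdef, smul_smul, mul_inv_cancel₀ hbC, one_smul]
  have hfE : f E = b * f G := by
    rw [← hEbG]
    exact frame_nsmul hf hG b (by rw [hEbG]; exact hE)
  have hqEG : (q : ℂ) • E = (a : ℂ) • G := by
    rw [hGdef, smul_smul, hqab]
    ring_nf
  rw [hqEG, frame_nsmul hf hG a (by rw [← hqEG]; exact hqE), hfE, hqr]
  field_simp
end

section
/- Let f be a frame function on quantum effects that is additive and monotone in the sense that E ≤ F implies f(E) ≤ f(F) (which follows from additivity and nonnegativity). Then f is homogeneous over nonnegative reals: for every effect E and real c ∈ [0,1], f(cE) = c f(E). -/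
open Matrix
open scoped ComplexOrder

lemma psd_real_smul {d : ℕ} {E : Matrix (Fin d) (Fin d) ℂ} (hE : E.PosSemidef)
    {t : ℝ} (ht : 0 ≤ t) : ((t : ℂ) • E).PosSemidef := by
  constructor
  · rw [Matrix.IsHermitian, conjTranspose_smul, hE.1.eq]
    congr 1
    simp [Complex.ext_iff]
  · intro x
    have h0 : (0 : ℂ) ≤ (t : ℂ) := by
      rw [Complex.le_def]; simp [ht]
    exact (hE.smul h0).2 x

lemma effect_real_smul {d : ℕ} {E : Matrix (Fin d) (Fin d) ℂ} (hE : IsEffect E)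
    {t : ℝ} (ht0 : 0 ≤ t) (ht1 : t ≤ 1) : IsEffect ((t : ℂ) • E) := by
  refine ⟨psd_real_smul hE.1 ht0, ?_⟩
  have key : (1 : Matrix (Fin d) (Fin d) ℂ) - (t : ℂ) • E
      = ((1 - t : ℝ) : ℂ) • (1 : Matrix (Fin d) (Fin d) ℂ) + (t : ℂ) • (1 - E) := by
    push_cast
    rw [smul_sub, sub_smul, one_smul]
    abel
  rw [key]
  exact (psd_real_smul Matrix.PosSemidef.one (by linarith)).add
    (psd_real_smul hE.2 ht0)

/-- A frame function that is additive, monotone (in the Loewner order on effects) and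
homogeneous over the nonnegative rationals is homogeneous over the reals in `[0,1]`. -/
theorem frame_function_real_homogeneous (d : ℕ) (hd : 2 ≤ d)
    (f : Matrix (Fin d) (Fin d) ℂ → ℝ) (hf : IsFrameFunction f)
    (hadd : ∀ E₁ E₂, IsEffect E₁ → IsEffect E₂ → IsEffect (E₁ + E₂) →
      f (E₁ + E₂) = f E₁ + f E₂)
    (hmono : ∀ E F, IsEffect E → IsEffect F → (F - E).PosSemidef → f E ≤ f F)
    (hrat : ∀ (E : Matrix (Fin d) (Fin d) ℂ) (q : ℚ), IsEffect E → 0 ≤ q →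
      IsEffect ((q : ℂ) • E) → f ((q : ℂ) • E) = q * f E)
    (E : Matrix (Fin d) (Fin d) ℂ) (hE : IsEffect E)
    (c : ℝ) (hc : c ∈ Set.Icc (0 : ℝ) 1) :
    f ((c : ℂ) • E) = c * f E := by
  obtain ⟨hc0, hc1⟩ := hc
  -- effect facts
  have hcE : IsEffect ((c : ℂ) • E) := effect_real_smul hE hc0 hc1
  have hfE0 : 0 ≤ f E := (hf.1 E hE).1
  have hfcE0 : 0 ≤ f ((c : ℂ) • E) := (hf.1 _ hcE).1
  -- monotone comparison between real multiples
  have hcompare : ∀ s t : ℝ, 0 ≤ s → s ≤ t → t ≤ 1 →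
      f ((s : ℂ) • E) ≤ f ((t : ℂ) • E) := by
    intro s t hs hst ht1
    apply hmono _ _ (effect_real_smul hE hs (hst.trans ht1))
      (effect_real_smul hE (hs.trans hst) ht1)
    have : (t : ℂ) • E - (s : ℂ) • E = ((t - s : ℝ) : ℂ) • E := by
      push_cast; rw [sub_smul]
    rw [this]
    exact psd_real_smul hE.1 (by linarith)
  -- rational homogeneity in real form
  have hratR : ∀ q : ℚ, 0 ≤ q → (q : ℝ) ≤ 1 → f (((q : ℝ) : ℂ) • E) = (q : ℝ) * f E := by
    intro q hq hq1
    have hQE : IsEffect (((q : ℝ) : ℂ) • E) :=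
      effect_real_smul hE (by exact_mod_cast hq) hq1
    have := hrat E q hE hq (by push_cast at hQE ⊢; exact hQE)
    push_cast at this ⊢
    exact this
  -- lower bound: c * f E ≤ f (cE)
  have hlow : c * f E ≤ f ((c : ℂ) • E) := by
    by_contra h
    push_neg at h
    have hfEpos : 0 < f E := by
      rcases hfE0.lt_or_eq with h' | h'
      · exact h'
      · rw [← h', mul_zero] at h; linarith
    have hdiv : f ((c : ℂ) • E) / f E < c := by
      rw [div_lt_iff₀ hfEpos]; linarith
    have hdiv0 : 0 ≤ f ((c : ℂ) • E) / f E := div_nonneg hfcE0 hfEpos.le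
    obtain ⟨q, hq1, hq2⟩ := exists_rat_btwn hdiv
    have hq0 : (0 : ℚ) ≤ q := by exact_mod_cast hdiv0.trans hq1.le
    have hq1' : (q : ℝ) ≤ 1 := le_trans hq2.le hc1
    have h1 : f (((q : ℝ) : ℂ) • E) ≤ f ((c : ℂ) • E) :=
      hcompare _ _ (by exact_mod_cast hq0) hq2.le hc1
    rw [hratR q hq0 hq1'] at h1
    have : f ((c : ℂ) • E) < (q : ℝ) * f E := by
      rw [← div_lt_iff₀ hfEpos] at *; exact hq1
    linarith
  -- upper bound: f (cE) ≤ c * f E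
  have hhigh : f ((c : ℂ) • E) ≤ c * f E := by
    by_contra h
    push_neg at h
    have hle : f ((c : ℂ) • E) ≤ f E := by
      have := hcompare c 1 hc0 hc1 le_rfl
      simpa using this
    have hfEpos : 0 < f E := by
      by_contra h'
      push_neg at h'
      have : f E = 0 := le_antisymm h' hfE0
      rw [this] at h hle
      rw [mul_zero] at h
      linarith
    have hdiv : c < f ((c : ℂ) • E) / f E := by
      rw [lt_div_iff₀ hfEpos]; linarith
    have hdiv1 : f ((c : ℂ) • E) / f E ≤ 1 := by
      rw [div_le_one hfEpos]; exact hle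
    obtain ⟨r, hr1, hr2⟩ := exists_rat_btwn hdiv
    have hr0 : (0 : ℚ) ≤ r := by exact_mod_cast hc0.trans hr1.le
    have hr1' : (r : ℝ) ≤ 1 := le_trans hr2.le hdiv1
    have h1 : f ((c : ℂ) • E) ≤ f (((r : ℝ) : ℂ) • E) :=
      hcompare _ _ hc0 hr1.le hr1'
    rw [hratR r hr0 hr1'] at h1
    have : (r : ℝ) * f E < f ((c : ℂ) • E) := by
      rw [← lt_div_iff₀ hfEpos]; exact hr2
    linarith
  linarith
end

section
/- Let f be a real-linear functional on the Hermitian operators of a finite-dimensional Hilbert space such that f(E) ≥ 0 for all effects E and ∑_{E∈X} f(E) = 1 for every POVM X. Then there exists a unique positive semidefinite operator ρ with trace 1 such that f(E) = Tr(ρE) for all effects E. -/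
open Matrix
open scoped ComplexOrder

section aux
variable {d : ℕ}

/-- Hermitian part. -/
noncomputable def hermP (A : Matrix (Fin d) (Fin d) ℂ) :
    selfAdjoint (Matrix (Fin d) (Fin d) ℂ) :=
  ⟨(1/2 : ℂ) • (A + Aᴴ), by
    show _ = _
    simp only [star_smul, star_add, star_eq_conjTranspose,
      conjTranspose_conjTranspose]
    rw [add_comm]
    congr 1
    simp [Complex.ext_iff]⟩

/-- Skew part (divided by i). -/
noncomputable def skewP (A : Matrix (Fin d) (Fin d) ℂ) :
    selfAdjoint (Matrix (Fin d) (Fin d) ℂ) :=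
  ⟨(Complex.I/2) • (Aᴴ - A), by
    show _ = _
    simp only [star_smul, star_sub, star_eq_conjTranspose,
      conjTranspose_conjTranspose]
    rw [show (star (Complex.I/2)) = -(Complex.I/2) by simp [Complex.ext_iff]; norm_num,
      neg_smul, ← smul_neg, neg_sub]⟩

lemma hermP_sa (A : Matrix (Fin d) (Fin d) ℂ) (hA : Aᴴ = A) :
    (hermP A : Matrix (Fin d) (Fin d) ℂ) = A := by
  show (1/2 : ℂ) • (A + Aᴴ) = A
  rw [hA, ← two_smul ℂ A, smul_smul]
  norm_num

lemma skewP_sa (A : Matrix (Fin d) (Fin d) ℂ) (hA : Aᴴ = A) :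
    (skewP A : Matrix (Fin d) (Fin d) ℂ) = 0 := by
  simp [skewP, hA]


variable (f : selfAdjoint (Matrix (Fin d) (Fin d) ℂ) →ₗ[ℝ] ℝ)

noncomputable def F0 (A : Matrix (Fin d) (Fin d) ℂ) : ℂ :=
  (f (hermP A) : ℂ) + Complex.I * (f (skewP A) : ℂ)

lemma hermP_add (A B : Matrix (Fin d) (Fin d) ℂ) : hermP (A + B) = hermP A + hermP B := by
  ext1
  show (1/2 : ℂ) • (A + B + (A + B)ᴴ) =
    (1/2 : ℂ) • (A + Aᴴ) + (1/2 : ℂ) • (B + Bᴴ)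
  rw [conjTranspose_add]; module

lemma skewP_add (A B : Matrix (Fin d) (Fin d) ℂ) : skewP (A + B) = skewP A + skewP B := by
  ext1
  show (Complex.I/2) • ((A + B)ᴴ - (A + B)) =
    (Complex.I/2) • (Aᴴ - A) + (Complex.I/2) • (Bᴴ - B)
  rw [conjTranspose_add]; module

lemma hermP_real (r : ℝ) (A : Matrix (Fin d) (Fin d) ℂ) :
    hermP ((r : ℂ) • A) = r • hermP A := by
  ext1
  show (1/2 : ℂ) • ((r : ℂ) • A + ((r : ℂ) • A)ᴴ) = r • ((1/2 : ℂ) • (A + Aᴴ))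
  rw [conjTranspose_smul, ← algebraMap_smul ℂ r ((1/2 : ℂ) • (A + Aᴴ))]
  simp only [Complex.coe_algebraMap, Complex.star_def, Complex.conj_ofReal]
  module

lemma skewP_real (r : ℝ) (A : Matrix (Fin d) (Fin d) ℂ) :
    skewP ((r : ℂ) • A) = r • skewP A := by
  ext1
  show (Complex.I/2) • (((r : ℂ) • A)ᴴ - (r : ℂ) • A) = r • ((Complex.I/2) • (Aᴴ - A))
  rw [conjTranspose_smul, ← algebraMap_smul ℂ r ((Complex.I/2) • (Aᴴ - A))]
  simp only [Complex.coe_algebraMap, Complex.star_def, Complex.conj_ofReal]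
  module

lemma hermP_I (A : Matrix (Fin d) (Fin d) ℂ) : hermP (Complex.I • A) = -skewP A := by
  ext1
  show (1/2 : ℂ) • (Complex.I • A + (Complex.I • A)ᴴ) = -((Complex.I/2) • (Aᴴ - A))
  rw [conjTranspose_smul, Complex.star_def, Complex.conj_I]
  module

lemma skewP_I (A : Matrix (Fin d) (Fin d) ℂ) : skewP (Complex.I • A) = hermP A := by
  ext1
  show (Complex.I/2) • ((Complex.I • A)ᴴ - Complex.I • A) = (1/2 : ℂ) • (A + Aᴴ)
  rw [conjTranspose_smul, Complex.star_def, Complex.conj_I]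
  ext i j
  simp only [Matrix.smul_apply, Matrix.sub_apply, Matrix.add_apply, Matrix.neg_apply,
    smul_eq_mul]
  ring_nf
  rw [Complex.I_sq]
  ring

lemma F0_add (A B : Matrix (Fin d) (Fin d) ℂ) : F0 f (A + B) = F0 f A + F0 f B := by
  unfold F0
  rw [hermP_add, skewP_add, map_add, map_add]
  push_cast; ring

lemma F0_real (r : ℝ) (A : Matrix (Fin d) (Fin d) ℂ) :
    F0 f ((r : ℂ) • A) = r * F0 f A := by
  unfold F0
  rw [hermP_real, skewP_real, _root_.map_smul, _root_.map_smul]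
  push_cast [smul_eq_mul]; ring

lemma F0_I (A : Matrix (Fin d) (Fin d) ℂ) : F0 f (Complex.I • A) = Complex.I * F0 f A := by
  unfold F0
  rw [hermP_I, skewP_I, map_neg]
  push_cast; ring_nf
  rw [Complex.I_sq]; ring

lemma F0_smul (c : ℂ) (A : Matrix (Fin d) (Fin d) ℂ) : F0 f (c • A) = c * F0 f A := by
  have hc : c • A = (c.re : ℂ) • A + (c.im : ℂ) • (Complex.I • A) := by
    rw [smul_smul, ← add_smul]
    norm_num [Complex.re_add_im]
  rw [hc, F0_add, F0_real, F0_real, F0_I, ← Complex.re_add_im c]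
  push_cast; ring_nf
  simp [Complex.re_add_im]
  ring

noncomputable def Fmap : Matrix (Fin d) (Fin d) ℂ →ₗ[ℂ] ℂ where
  toFun := F0 f
  map_add' := F0_add f
  map_smul' := F0_smul f

lemma Fmap_sa (E : selfAdjoint (Matrix (Fin d) (Fin d) ℂ)) :
    Fmap f (E : Matrix (Fin d) (Fin d) ℂ) = (f E : ℂ) := by
  have h1 : hermP (E : Matrix (Fin d) (Fin d) ℂ) = E := by
    ext1; exact hermP_sa _ E.2
  have h2 : skewP (E : Matrix (Fin d) (Fin d) ℂ) = 0 := by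
    ext1; exact skewP_sa _ E.2
  show F0 f _ = _
  unfold F0
  rw [h1, h2, map_zero]
  push_cast; ring

lemma Fmap_conj (A : Matrix (Fin d) (Fin d) ℂ) :
    (starRingEnd ℂ) (Fmap f A) = Fmap f Aᴴ := by
  have h1 : hermP Aᴴ = hermP A := by
    ext1
    show (1/2 : ℂ) • (Aᴴ + Aᴴᴴ) = (1/2 : ℂ) • (A + Aᴴ)
    rw [conjTranspose_conjTranspose, add_comm]
  have h2 : skewP Aᴴ = -skewP A := by
    ext1
    show (Complex.I/2) • (Aᴴᴴ - Aᴴ) = -((Complex.I/2) • (Aᴴ - A))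
    rw [conjTranspose_conjTranspose]; module
  show (starRingEnd ℂ) (F0 f A) = F0 f Aᴴ
  unfold F0
  rw [h1, h2, map_neg, map_add, _root_.map_mul, Complex.conj_I, Complex.conj_ofReal,
    Complex.conj_ofReal]
  push_cast; ring

noncomputable def rhoOf : Matrix (Fin d) (Fin d) ℂ :=
  Matrix.of fun k j => Fmap f (Matrix.single j k 1)

lemma trace_rhoOf (A : Matrix (Fin d) (Fin d) ℂ) :
    (rhoOf f * A).trace = Fmap f A := by
  conv_rhs => rw [matrix_eq_sum_single A]
  rw [map_sum]
  simp_rw [map_sum]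
  have hterm : ∀ j k, Fmap f (Matrix.single j k (A j k)) =
      A j k * Fmap f (Matrix.single j k 1) := by
    intro j k
    rw [show Matrix.single j k (A j k) = A j k • Matrix.single j k 1 by
      rw [smul_single, smul_eq_mul, mul_one], _root_.map_smul, smul_eq_mul]
  simp_rw [hterm]
  rw [Matrix.trace]
  simp only [Matrix.diag_apply, Matrix.mul_apply, rhoOf, Matrix.of_apply]
  rw [Finset.sum_comm]
  congr 1; ext j; congr 1; ext k; ring


lemma trace_mul_vecMulVec (M : Matrix (Fin d) (Fin d) ℂ) (x : Fin d → ℂ) :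
    (M * vecMulVec x (star x)).trace = star x ⬝ᵥ (M *ᵥ x) := by
  simp only [Matrix.trace, Matrix.diag_apply, Matrix.mul_apply, vecMulVec_apply,
    dotProduct, Matrix.mulVec, Pi.star_apply]
  simp_rw [Finset.mul_sum]
  exact Finset.sum_congr rfl fun i _ => Finset.sum_congr rfl fun j _ => by ring

lemma vecMulVec_herm (x : Fin d → ℂ) :
    (vecMulVec x (star x))ᴴ = vecMulVec x (star x) := by
  ext i j
  simp only [conjTranspose_apply, vecMulVec_apply, Pi.star_apply, star_mul', star_star]
  ring

lemma vecMulVec_psd (w : Fin d → ℂ) : (vecMulVec w (star w)).PosSemidef := by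
  refine Matrix.posSemidef_iff_dotProduct_mulVec.mpr ⟨vecMulVec_herm w, fun y => ?_⟩
  have : star y ⬝ᵥ (vecMulVec w (star w) *ᵥ y) =
      star (star w ⬝ᵥ y) * (star w ⬝ᵥ y) := by
    simp only [dotProduct, Matrix.mulVec, vecMulVec_apply, Pi.star_apply, star_sum,
      star_mul', star_star]
    rw [Finset.sum_mul_sum]
    simp_rw [Finset.mul_sum]
    exact Finset.sum_congr rfl fun i _ => Finset.sum_congr rfl fun j _ => by ring
  rw [this]
  exact star_mul_self_nonneg _

lemma vecMulVec_idem (w : Fin d → ℂ) (hw : star w ⬝ᵥ w = 1) :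
    vecMulVec w (star w) * vecMulVec w (star w) = vecMulVec w (star w) := by
  ext i j
  simp only [Matrix.mul_apply, vecMulVec_apply, Pi.star_apply]
  calc ∑ k, (w i * star (w k)) * (w k * star (w j))
      = ∑ k, (w i * star (w j)) * (star (w k) * w k) :=
        Finset.sum_congr rfl fun k _ => by ring
    _ = (w i * star (w j)) * ∑ k, star (w k) * w k := by rw [Finset.mul_sum]
    _ = w i * star (w j) := by
        have : (∑ k, star (w k) * w k) = 1 := by simpa [dotProduct] using hw
        rw [this, mul_one]

lemma vecMulVec_effect (w : Fin d → ℂ) (hw : star w ⬝ᵥ w = 1) :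
    IsEffect (vecMulVec w (star w)) := by
  refine ⟨vecMulVec_psd w, ?_⟩
  have h1Q : ((1 : Matrix (Fin d) (Fin d) ℂ) - vecMulVec w (star w))ᴴ *
      (1 - vecMulVec w (star w)) = 1 - vecMulVec w (star w) := by
    rw [conjTranspose_sub, conjTranspose_one, vecMulVec_herm, sub_mul, one_mul,
      mul_sub, mul_one, vecMulVec_idem w hw, sub_self, sub_zero]
  rw [← h1Q]
  exact posSemidef_conjTranspose_mul_self _

lemma exists_effect_decomp (x : Fin d → ℂ) (hx : x ≠ 0) :
    ∃ (r : ℝ) (w : Fin d → ℂ), 0 < r ∧ IsEffect (vecMulVec w (star w)) ∧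
      vecMulVec x (star x) = (r : ℂ) • vecMulVec w (star w) := by
  set r : ℝ := ∑ i, Complex.normSq (x i) with hr_def
  have hr : 0 < r := by
    obtain ⟨i, hi⟩ := Function.ne_iff.mp hx
    refine Finset.sum_pos' (fun j _ => Complex.normSq_nonneg _) ⟨i, Finset.mem_univ i, ?_⟩
    exact Complex.normSq_pos.mpr hi
  set s : ℝ := (Real.sqrt r)⁻¹ with hs_def
  have hsqrt : (0:ℝ) < Real.sqrt r := Real.sqrt_pos.mpr hr
  have hs2 : s * s * r = 1 := by
    rw [hs_def, ← mul_inv, Real.mul_self_sqrt hr.le, inv_mul_cancel₀ hr.ne']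
  refine ⟨r, (s : ℂ) • x, hr, ?_, ?_⟩
  · apply vecMulVec_effect
    have : star ((s:ℂ) • x) = (s:ℂ) • star x := by
      ext i; simp [Complex.conj_ofReal]
    rw [this, smul_dotProduct, dotProduct_smul, smul_eq_mul, smul_eq_mul]
    have hxx : star x ⬝ᵥ x = (r : ℂ) := by
      simp only [dotProduct, Pi.star_apply, hr_def]
      push_cast
      exact Finset.sum_congr rfl fun i _ => (Complex.normSq_eq_conj_mul_self).symm
    rw [hxx, ← mul_assoc]
    exact_mod_cast congrArg (Complex.ofReal) hs2
  · ext i j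
    simp only [vecMulVec_apply, Pi.smul_apply, Matrix.smul_apply, Pi.star_apply,
      smul_eq_mul, star_mul', Complex.star_def, Complex.conj_ofReal]
    have h1 : ((s:ℂ)) * (s:ℂ) * (r:ℂ) = 1 := by exact_mod_cast congrArg Complex.ofReal hs2
    linear_combination (-(x i * (starRingEnd ℂ) (x j))) * h1

lemma stdBasisMatrix_conj (j k : Fin d) :
    (Matrix.single j k (1:ℂ))ᴴ = Matrix.single k j 1 := by
  ext a b
  simp only [conjTranspose_apply, Matrix.single, Matrix.of_apply,
    apply_ite (star : ℂ → ℂ), star_one, star_zero]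
  congr 1
  exact propext and_comm

end aux

/-- Gleason-type representation: a real-linear functional on Hermitian operators that is
nonnegative on effects and normalized over every POVM is represented by a unique density
matrix via the Hilbert–Schmidt inner product (Born rule). -/
theorem linear_frame_function_is_born_rule (d : ℕ) (hd : 2 ≤ d)
    (f : selfAdjoint (Matrix (Fin d) (Fin d) ℂ) →ₗ[ℝ] ℝ)
    (hpos : ∀ E : selfAdjoint (Matrix (Fin d) (Fin d) ℂ),
      IsEffect (E : Matrix (Fin d) (Fin d) ℂ) → 0 ≤ f E)
    (hnorm : ∀ (n : ℕ) (X : Fin n → selfAdjoint (Matrix (Fin d) (Fin d) ℂ)),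
      (∀ i, IsEffect (X i : Matrix (Fin d) (Fin d) ℂ)) →
      (∑ i, (X i : Matrix (Fin d) (Fin d) ℂ)) = 1 → ∑ i, f (X i) = 1) :
    ∃! ρ : Matrix (Fin d) (Fin d) ℂ, ρ.PosSemidef ∧ ρ.trace = 1 ∧
      ∀ E : selfAdjoint (Matrix (Fin d) (Fin d) ℂ),
        IsEffect (E : Matrix (Fin d) (Fin d) ℂ) →
        f E = ((ρ * (E : Matrix (Fin d) (Fin d) ℂ)).trace).re := by
  classical
  have Trep : ∀ E : selfAdjoint (Matrix (Fin d) (Fin d) ℂ),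
      (rhoOf f * (E : Matrix (Fin d) (Fin d) ℂ)).trace = (f E : ℂ) :=
    fun E => (trace_rhoOf f _).trans (Fmap_sa f E)
  set oneE : selfAdjoint (Matrix (Fin d) (Fin d) ℂ) := ⟨1, _root_.IsSelfAdjoint.one _⟩ with honeE
  have hone : f oneE = 1 := by
    have h := hnorm 1 (fun _ => oneE)
      (fun _ => ⟨Matrix.PosSemidef.one, by rw [sub_self]; exact Matrix.PosSemidef.zero⟩)
      (by simp [honeE])
    simpa using h
  have htrace : (rhoOf f).trace = 1 := by
    have h := Trep oneE
    rw [show ((oneE : Matrix (Fin d) (Fin d) ℂ)) = 1 from rfl, mul_one] at h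
    rw [h, hone, Complex.ofReal_one]
  have hSnn : ∀ x : Fin d → ℂ,
      0 ≤ f ⟨vecMulVec x (star x), (vecMulVec_psd x).1⟩ := by
    intro x
    by_cases hx : x = 0
    · subst hx
      have h0 : (⟨vecMulVec (0 : Fin d → ℂ) (star 0), (vecMulVec_psd 0).1⟩ :
          selfAdjoint (Matrix (Fin d) (Fin d) ℂ)) = 0 := by
        apply Subtype.ext
        show vecMulVec (0 : Fin d → ℂ) (star 0) = 0
        ext i j
        simp [vecMulVec_apply]
      rw [h0, map_zero]
    · obtain ⟨r, w, hr, heff, hdec⟩ := exists_effect_decomp x hx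
      have hwsa : IsSelfAdjoint (vecMulVec w (star w)) := (vecMulVec_psd w).1
      have h1 : (⟨vecMulVec x (star x), (vecMulVec_psd x).1⟩ :
          selfAdjoint (Matrix (Fin d) (Fin d) ℂ)) =
          r • ⟨vecMulVec w (star w), hwsa⟩ := by
        apply Subtype.ext
        show vecMulVec x (star x) = r • vecMulVec w (star w)
        rw [hdec, ← algebraMap_smul ℂ r (vecMulVec w (star w)), Complex.coe_algebraMap]
      rw [h1, _root_.map_smul, smul_eq_mul]
      exact mul_nonneg hr.le (hpos _ heff)
  have hherm : (rhoOf f).IsHermitian := by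
    show (rhoOf f)ᴴ = rhoOf f
    ext k j
    show star (rhoOf f j k) = rhoOf f k j
    show (starRingEnd ℂ) (Fmap f (Matrix.single k j 1)) = Fmap f (Matrix.single j k 1)
    rw [Fmap_conj, stdBasisMatrix_conj]
  have hpsd : (rhoOf f).PosSemidef := by
    refine Matrix.posSemidef_iff_dotProduct_mulVec.mpr ⟨hherm, fun x => ?_⟩
    have h1 : star x ⬝ᵥ (rhoOf f *ᵥ x) =
        (rhoOf f * vecMulVec x (star x)).trace := (trace_mul_vecMulVec _ x).symm
    rw [h1, Trep ⟨vecMulVec x (star x), (vecMulVec_psd x).1⟩]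
    exact Complex.zero_le_real.mpr (hSnn x)
  have hrep : ∀ E : selfAdjoint (Matrix (Fin d) (Fin d) ℂ),
      IsEffect (E : Matrix (Fin d) (Fin d) ℂ) →
      f E = ((rhoOf f * (E : Matrix (Fin d) (Fin d) ℂ)).trace).re := by
    intro E _
    rw [Trep E, Complex.ofReal_re]
  refine ⟨rhoOf f, ⟨hpsd, htrace, hrep⟩, ?_⟩
  rintro σ ⟨hσpsd, hσtr, hσrep⟩
  have hD : (σ - rhoOf f)ᴴ = σ - rhoOf f := by
    rw [conjTranspose_sub, hσpsd.1, hherm]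
  set D := σ - rhoOf f with hDdef
  have hq : ∀ x : Fin d → ℂ, star x ⬝ᵥ (D *ᵥ x) = 0 := by
    intro x
    by_cases hx : x = 0
    · subst hx; simp
    obtain ⟨r, w, hr, heff, hdec⟩ := exists_effect_decomp x hx
    have hwsa : IsSelfAdjoint (vecMulVec w (star w)) := (vecMulVec_psd w).1
    have h1 : ((σ * vecMulVec w (star w)).trace).re =
        ((rhoOf f * vecMulVec w (star w)).trace).re := by
      rw [← hσrep ⟨_, hwsa⟩ heff, ← hrep ⟨_, hwsa⟩ heff]
    have h2 : ((D * vecMulVec w (star w)).trace).re = 0 := by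
      rw [hDdef, sub_mul, trace_sub, Complex.sub_re, h1, sub_self]
    have h3 : star x ⬝ᵥ (D *ᵥ x) = (r : ℂ) * (D * vecMulVec w (star w)).trace := by
      rw [← trace_mul_vecMulVec D x, hdec, Matrix.mul_smul, trace_smul, smul_eq_mul]
    have h4 : (star x ⬝ᵥ (D *ᵥ x)).re = 0 := by
      rw [h3, Complex.re_ofReal_mul, h2, mul_zero]
    have h5 : (starRingEnd ℂ) (star x ⬝ᵥ (D *ᵥ x)) = star x ⬝ᵥ (D *ᵥ x) := by
      show star (star x ⬝ᵥ (D *ᵥ x)) = star x ⬝ᵥ (D *ᵥ x)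
      rw [← star_dotProduct (D *ᵥ x) x, star_mulVec, hD, ← dotProduct_mulVec]
    exact Complex.ext (by simpa using h4) (by simpa using Complex.conj_eq_iff_im.mp h5)
  have hT : Matrix.toEuclideanLin D = 0 := by
    rw [← inner_map_self_eq_zero]
    intro y
    set y' : Fin d → ℂ := (WithLp.equiv 2 (Fin d → ℂ)) y with hy'
    have h0 := congrArg (starRingEnd ℂ) (hq y')
    rw [map_zero] at h0
    simp only [dotProduct, Pi.star_apply, map_sum, _root_.map_mul, Complex.star_def, Complex.conj_conj] at h0
    rw [PiLp.inner_apply]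
    simp only [RCLike.inner_apply']
    have hterm : ∀ i, (starRingEnd ℂ) ((Matrix.toEuclideanLin D) y i) * y i =
        y' i * (starRingEnd ℂ) ((D *ᵥ y') i) := by
      intro i
      rw [Matrix.toEuclideanLin_apply]
      rw [mul_comm]
      rfl
    calc (∑ i, (starRingEnd ℂ) ((Matrix.toEuclideanLin D) y i) * y i)
        = ∑ i, y' i * (starRingEnd ℂ) ((D *ᵥ y') i) :=
          Finset.sum_congr rfl fun i _ => hterm i
      _ = 0 := h0
  have hD0 : D = 0 := by
    have := (LinearEquiv.map_eq_zero_iff Matrix.toEuclideanLin).mp hT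
    exact this
  exact sub_eq_zero.mp hD0
end

section
/- Let f be a frame function for two local regions A and B: f maps pairs of completely positive trace-non-increasing maps to [0,1] and satisfies ∑_{M∈I_A, N∈I_B} f(M,N) = 1 for all instruments I_A, I_B (finite sets of CP maps summing to a CPTP map). Then f is additive in each argument: if M₁, M₂, and M₁+M₂ are CP trace-non-increasing and there exists a CP trace-non-increasing M₃ with M₁+M₂+M₃ trace-preserving, then for any CPTP map N̄, f(M₁+M₂, N̄) = f(M₁, N̄) + f(M₂, N̄). -/
open Matrix
open scoped ComplexOrder Kronecker

/-- The extension `(id_n ⊗ M)` of a linear map `M : L(H_a) → L(H_b)` by an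
`n`-dimensional ancilla. -/
noncomputable def tensorExt {a b : ℕ}
    (M : Matrix (Fin a) (Fin a) ℂ →ₗ[ℂ] Matrix (Fin b) (Fin b) ℂ) (n : ℕ)
    (ρ : Matrix (Fin n × Fin a) (Fin n × Fin a) ℂ) :
    Matrix (Fin n × Fin b) (Fin n × Fin b) ℂ :=
  Matrix.of fun p q => M (Matrix.of fun i j => ρ (p.1, i) (q.1, j)) p.2 q.2

/-- Complete positivity: every ancilla extension maps positive operators to
positive operators. -/
def IsCP {a b : ℕ}
    (M : Matrix (Fin a) (Fin a) ℂ →ₗ[ℂ] Matrix (Fin b) (Fin b) ℂ) : Prop :=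
  ∀ (n : ℕ) (ρ : Matrix (Fin n × Fin a) (Fin n × Fin a) ℂ),
    ρ.PosSemidef → (tensorExt M n ρ).PosSemidef

/-- Trace non-increasing on positive operators. -/
def IsTNI {a b : ℕ}
    (M : Matrix (Fin a) (Fin a) ℂ →ₗ[ℂ] Matrix (Fin b) (Fin b) ℂ) : Prop :=
  ∀ ρ : Matrix (Fin a) (Fin a) ℂ, ρ.PosSemidef → ((M ρ).trace).re ≤ (ρ.trace).re

/-- Trace preserving. -/
def IsTP {a b : ℕ}
    (M : Matrix (Fin a) (Fin a) ℂ →ₗ[ℂ] Matrix (Fin b) (Fin b) ℂ) : Prop :=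
  ∀ ρ : Matrix (Fin a) (Fin a) ℂ, (M ρ).trace = ρ.trace

/-- A completely positive trace-non-increasing map (a quantum operation / event). -/
def IsCPTN {a b : ℕ}
    (M : Matrix (Fin a) (Fin a) ℂ →ₗ[ℂ] Matrix (Fin b) (Fin b) ℂ) : Prop :=
  IsCP M ∧ IsTNI M

/-- A completely positive trace-preserving map (a quantum channel). -/
def IsCPTP {a b : ℕ}
    (M : Matrix (Fin a) (Fin a) ℂ →ₗ[ℂ] Matrix (Fin b) (Fin b) ℂ) : Prop :=
  IsCP M ∧ IsTP M

/-- An instrument: a finite family of CP trace-non-increasing maps summing to a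
trace-preserving (CPTP) map. -/
def IsInstrument {a b n : ℕ}
    (I : Fin n → (Matrix (Fin a) (Fin a) ℂ →ₗ[ℂ] Matrix (Fin b) (Fin b) ℂ)) : Prop :=
  (∀ i, IsCPTN (I i)) ∧ IsTP (∑ i, I i)

/-- A process frame function (normalized over all pairs of instruments) is additive in
each argument. -/
theorem process_frame_function_additive (aI aO bI bO : ℕ)
    (f : (Matrix (Fin aI) (Fin aI) ℂ →ₗ[ℂ] Matrix (Fin aO) (Fin aO) ℂ) →
         (Matrix (Fin bI) (Fin bI) ℂ →ₗ[ℂ] Matrix (Fin bO) (Fin bO) ℂ) → ℝ)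
    (hrange : ∀ M N, IsCPTN M → IsCPTN N → f M N ∈ Set.Icc (0 : ℝ) 1)
    (hnorm : ∀ (n m : ℕ)
      (IA : Fin n → (Matrix (Fin aI) (Fin aI) ℂ →ₗ[ℂ] Matrix (Fin aO) (Fin aO) ℂ))
      (IB : Fin m → (Matrix (Fin bI) (Fin bI) ℂ →ₗ[ℂ] Matrix (Fin bO) (Fin bO) ℂ)),
      IsInstrument IA → IsInstrument IB → ∑ i, ∑ j, f (IA i) (IB j) = 1)
    (M₁ M₂ M₃ : Matrix (Fin aI) (Fin aI) ℂ →ₗ[ℂ] Matrix (Fin aO) (Fin aO) ℂ)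
    (h₁ : IsCPTN M₁) (h₂ : IsCPTN M₂) (h₁₂ : IsCPTN (M₁ + M₂)) (h₃ : IsCPTN M₃)
    (hcomplete : IsTP (M₁ + M₂ + M₃))
    (Nbar : Matrix (Fin bI) (Fin bI) ℂ →ₗ[ℂ] Matrix (Fin bO) (Fin bO) ℂ)
    (hN : IsCPTP Nbar) :
    f (M₁ + M₂) Nbar = f M₁ Nbar + f M₂ Nbar := by
  have hNtn : IsCPTN Nbar := ⟨hN.1, fun ρ hρ => le_of_eq (by rw [hN.2])⟩
  have hIB : IsInstrument (fun _ : Fin 1 => Nbar) := by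
    refine ⟨fun _ => hNtn, ?_⟩
    intro ρ
    simp [hN.2 ρ]
  have h3 : IsInstrument (![M₁, M₂, M₃]) := by
    refine ⟨fun i => ?_, ?_⟩
    · fin_cases i <;> simpa using ‹_›
    · intro ρ
      have : (∑ i, ![M₁, M₂, M₃] i) = M₁ + M₂ + M₃ := by
        simp [Fin.sum_univ_three]
      rw [this]; exact hcomplete ρ
  have h2 : IsInstrument (![M₁ + M₂, M₃]) := by
    refine ⟨fun i => ?_, ?_⟩
    · fin_cases i <;> simpa using ‹_›
    · intro ρ
      have : (∑ i, ![M₁ + M₂, M₃] i) = M₁ + M₂ + M₃ := by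
        simp [Fin.sum_univ_two]
      rw [this]; exact hcomplete ρ
  have e3 := hnorm 3 1 ![M₁, M₂, M₃] (fun _ => Nbar) h3 hIB
  have e2 := hnorm 2 1 ![M₁ + M₂, M₃] (fun _ => Nbar) h2 hIB
  simp [Fin.sum_univ_three] at e3
  simp [Fin.sum_univ_two] at e2
  linarith
end
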